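/- Let (g_1,...,g_K) be multinomially distributed with parameters g and (p_1,...,p_K), and let a_1,...,a_K be fixed reals in [0, â] with â > 0 and β = 2·Σ_i p_i a_i² > 0. Then for any M ∈ (0, β/â), Pr[Σ_i p_i a_i ≥ Σ_i (g_i/g)·a_i − M] ≥ 1 − exp(−g M² / (2β)). -/

import Mathlib

open MeasureTheory ProbabilityTheory

lemma fin_comp_eq_sum_indicator {Ω : Type*} [MeasurableSpace Ω] {K : ℕ}
    (Z : Ω → Fin K) (f : Fin K → ℝ) :
    (fun ω => f (Z ω)) = fun ω => ∑ i, Set.indicator {ω | Z ω = i} (fun _ => f i) ω := by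
  funext ω
  have : ∀ i : Fin K, Set.indicator {ω | Z ω = i} (fun _ => f i) ω
      = if Z ω = i then f i else 0 := by
    intro i; simp [Set.indicator_apply, Set.mem_setOf_eq]
  simp_rw [this]
  simp

lemma integrable_fin_comp {Ω : Type*} [MeasurableSpace Ω] (μ : Measure Ω)
    [IsProbabilityMeasure μ] {K : ℕ}
    (Z : Ω → Fin K) (hZ : Measurable Z) (f : Fin K → ℝ) :
    Integrable (fun ω => f (Z ω)) μ := by
  rw [fin_comp_eq_sum_indicator]
  refine integrable_finset_sum _ (fun i _ => ?_)
  exact (integrable_const (f i)).indicator (hZ (measurableSet_singleton i))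

lemma integral_fin_comp {Ω : Type*} [MeasurableSpace Ω] (μ : Measure Ω)
    [IsProbabilityMeasure μ] {K : ℕ} (p : Fin K → ℝ) (hp : ∀ i, 0 ≤ p i)
    (Z : Ω → Fin K) (hZ : Measurable Z)
    (hlaw : ∀ i, μ {ω | Z ω = i} = ENNReal.ofReal (p i)) (f : Fin K → ℝ) :
    ∫ ω, f (Z ω) ∂μ = ∑ i, p i * f i := by
  rw [fin_comp_eq_sum_indicator]
  have h1 : ∫ ω, ∑ i, Set.indicator {ω | Z ω = i} (fun _ => f i) ω ∂μ
      = ∑ i, ∫ ω, Set.indicator {ω | Z ω = i} (fun _ => f i) ω ∂μ :=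
    integral_finset_sum _ (fun i _ =>
      (integrable_const (f i)).indicator (hZ (measurableSet_singleton i)))
  rw [h1]
  refine Finset.sum_congr rfl (fun i _ => ?_)
  show ∫ ω, (Z ⁻¹' {i}).indicator (fun _ => f i) ω ∂μ = p i * f i
  rw [integral_indicator_const _ (hZ (measurableSet_singleton i))]
  have : μ (Z ⁻¹' {i}) = ENNReal.ofReal (p i) := hlaw i
  rw [measureReal_def, this, ENNReal.toReal_ofReal (hp i)]
  simp [mul_comm]

lemma exp_le_one_add_add_sq {x : ℝ} (h0 : 0 ≤ x) (h1 : x ≤ 1) :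
    Real.exp x ≤ 1 + x + x ^ 2 := by
  have h := Real.exp_bound' h0 h1 (n := 2) (by norm_num)
  have hs : (∑ m ∈ Finset.range 2, x ^ m / m.factorial) = 1 + x := by
    simp [Finset.sum_range_succ]
  rw [hs] at h
  norm_num [Nat.factorial] at h
  nlinarith [sq_nonneg x]

/-- Multinomial counts modeled as counts of `g` i.i.d. categorical samples. -/
theorem stmt_8 {Ω : Type*} [MeasurableSpace Ω]
    (μ : Measure Ω) [IsProbabilityMeasure μ]
    (K : ℕ) (hK : 0 < K) (g : ℕ) (hg : 0 < g)
    (p : Fin K → ℝ) (hp : ∀ i, 0 ≤ p i) (hpsum : ∑ i, p i = 1)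
    (X : Fin g → Ω → Fin K) (hmeas : ∀ j, Measurable (X j))
    (hindep : iIndepFun (m := fun _ => inferInstance) X μ)
    (hlaw : ∀ j i, μ {ω | X j ω = i} = ENNReal.ofReal (p i))
    (cnt : Fin K → Ω → ℕ)
    (hcnt : ∀ i ω, cnt i ω = (Finset.univ.filter (fun j => X j ω = i)).card)
    (a : Fin K → ℝ) (ahat : ℝ) (hahat : 0 < ahat)
    (ha : ∀ i, a i ∈ Set.Icc 0 ahat)
    (β : ℝ) (hβ : β = 2 * ∑ i, p i * a i ^ 2) (hβpos : 0 < β)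
    (M : ℝ) (hM : M ∈ Set.Ioo 0 (β / ahat)) :
    μ {ω | ∑ i, p i * a i ≥ (∑ i, ((cnt i ω : ℝ) / g) * a i) - M} ≥
      1 - ENNReal.ofReal (Real.exp (-(g : ℝ) * M ^ 2 / (2 * β))) := by
  obtain ⟨hM0, hMβ⟩ := hM
  set m := ∑ i, p i * a i with hm
  set t := M / β with htdef
  have ht0 : 0 < t := div_pos hM0 hβpos
  have hga : (0:ℝ) < g := by exact_mod_cast hg
  set Y : Fin g → Ω → ℝ := fun j => a ∘ X j with hYdef
  have hameas : Measurable a := measurable_of_countable a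
  have hYmeas : ∀ j, Measurable (Y j) := fun j => hameas.comp (hmeas j)
  have hYindep : iIndepFun (m := fun _ => inferInstance) Y μ :=
    hindep.comp (fun _ => a) (fun _ => hameas)
  set c := ∑ i, p i * Real.exp (t * a i) with hc
  have hmgf : ∀ j, mgf (Y j) μ t = c := by
    intro j
    have := integral_fin_comp μ p hp (X j) (hmeas j) (hlaw j)
      (fun i => Real.exp (t * a i))
    simpa [mgf, hYdef, Function.comp] using this
  have hcnonneg : 0 ≤ c :=
    Finset.sum_nonneg fun i _ => mul_nonneg (hp i) (Real.exp_pos _).le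
  have hta : ∀ i : Fin K, t * a i ≤ 1 := by
    intro i
    have h1 : t * a i ≤ t * ahat := mul_le_mul_of_nonneg_left (ha i).2 ht0.le
    have h2 : t * ahat < 1 := by
      rw [htdef, div_mul_eq_mul_div, div_lt_one hβpos]
      calc M * ahat < (β / ahat) * ahat := mul_lt_mul_of_pos_right hMβ hahat
        _ = β := by field_simp
    linarith
  have hβhalf : β / 2 = ∑ i, p i * a i ^ 2 := by rw [hβ]; ring
  have hcle : c ≤ Real.exp (t * m + t ^ 2 * (β / 2)) := by
    have h1 : c ≤ ∑ i, p i * (1 + t * a i + (t * a i) ^ 2) :=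
      Finset.sum_le_sum fun i _ =>
        mul_le_mul_of_nonneg_left
          (exp_le_one_add_add_sq (mul_nonneg ht0.le (ha i).1) (hta i)) (hp i)
    have h2 : ∑ i, p i * (1 + t * a i + (t * a i) ^ 2)
        = (∑ i, p i) + t * (∑ i, p i * a i) + t ^ 2 * (∑ i, p i * a i ^ 2) := by
      rw [Finset.mul_sum, Finset.mul_sum, ← Finset.sum_add_distrib,
        ← Finset.sum_add_distrib]
      exact Finset.sum_congr rfl fun i _ => by ring
    rw [h2, hpsum, ← hβhalf, ← hm] at h1
    have h3 : t * m + t ^ 2 * (β / 2) + 1 ≤ Real.exp (t * m + t ^ 2 * (β / 2)) :=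
      Real.add_one_le_exp _
    linarith
  -- mgf of the sum
  have hmgfsum : mgf (∑ j, Y j) μ t = c ^ g := by
    rw [hYindep.mgf_sum hYmeas Finset.univ]
    rw [Finset.prod_congr rfl fun j _ => hmgf j, Finset.prod_const,
      Finset.card_univ, Fintype.card_fin]
  have hSint : Integrable (fun ω => Real.exp (t * (∑ j, Y j) ω)) μ := by
    refine hYindep.integrable_exp_mul_sum hYmeas (fun j _ => ?_)
    have := integrable_fin_comp μ (X j) (hmeas j) (fun i => Real.exp (t * a i))
    simpa [hYdef, Function.comp] using this
  set ε := (m + M) * g with hε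
  have hch := measure_ge_le_exp_mul_mgf (μ := μ) (X := ∑ j, Y j) ε ht0.le hSint
  rw [hmgfsum] at hch
  have hpow : c ^ g ≤ Real.exp ((g : ℝ) * (t * m + t ^ 2 * (β / 2))) := by
    calc c ^ g ≤ (Real.exp (t * m + t ^ 2 * (β / 2))) ^ g :=
          pow_le_pow_left₀ hcnonneg hcle g
      _ = Real.exp ((g : ℝ) * (t * m + t ^ 2 * (β / 2))) :=
          (Real.exp_nat_mul _ g).symm
  have hexp_eq : -t * ε + (g : ℝ) * (t * m + t ^ 2 * (β / 2))
      = -(g : ℝ) * M ^ 2 / (2 * β) := by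
    rw [hε, htdef]
    field_simp
    ring
  have hch2 : (μ {ω | ε ≤ (∑ j, Y j) ω}).toReal
      ≤ Real.exp (-(g : ℝ) * M ^ 2 / (2 * β)) := by
    calc (μ {ω | ε ≤ (∑ j, Y j) ω}).toReal
        ≤ Real.exp (-t * ε) * c ^ g := hch
      _ ≤ Real.exp (-t * ε) * Real.exp ((g : ℝ) * (t * m + t ^ 2 * (β / 2))) := by
          exact mul_le_mul_of_nonneg_left hpow (Real.exp_pos _).le
      _ = Real.exp (-(g : ℝ) * M ^ 2 / (2 * β)) := by
          rw [← Real.exp_add, hexp_eq]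
  -- rewrite the target set
  have hdiv : ∀ ω, ∑ i, ((cnt i ω : ℝ) / g) * a i
      = (∑ i, (cnt i ω : ℝ) * a i) / g := by
    intro ω
    rw [Finset.sum_div]
    exact Finset.sum_congr rfl fun i _ => div_mul_eq_mul_div _ _ _
  have hsum_eq : ∀ ω, ∑ i, (cnt i ω : ℝ) * a i = (∑ j, Y j) ω := by
    intro ω
    have happ : (∑ j, Y j) ω = ∑ j, a (X j ω) := by
      simp [hYdef, Function.comp]
    rw [happ, ← Finset.sum_fiberwise Finset.univ (fun j => X j ω)
      (fun j => a (X j ω))]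
    refine Finset.sum_congr rfl fun i _ => ?_
    rw [hcnt,
      Finset.sum_congr rfl (fun j hj => by rw [(Finset.mem_filter.1 hj).2]),
      Finset.sum_const, nsmul_eq_mul]
  have hSeq : {ω | m ≥ (∑ i, ((cnt i ω : ℝ) / g) * a i) - M}
      = {ω | (∑ j, Y j) ω ≤ ε} := by
    ext ω
    simp only [Set.mem_setOf_eq]
    rw [hdiv ω, hsum_eq ω, ge_iff_le, sub_le_iff_le_add, div_le_iff₀ hga, hε]
  rw [hSeq]
  have hfun : (∑ j, Y j) = fun ω => ∑ j, Y j ω := by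
    funext ω; simp [Finset.sum_apply]
  have hmeasS : Measurable (∑ j, Y j) := by
    rw [hfun]; exact Finset.measurable_sum _ fun j _ => hYmeas j
  have hms : MeasurableSet {ω | (∑ j, Y j) ω ≤ ε} :=
    measurableSet_le hmeasS measurable_const
  have hcompl : μ ({ω | (∑ j, Y j) ω ≤ ε})ᶜ
      ≤ ENNReal.ofReal (Real.exp (-(g : ℝ) * M ^ 2 / (2 * β))) := by
    have hsub : ({ω | (∑ j, Y j) ω ≤ ε})ᶜ ⊆ {ω | ε ≤ (∑ j, Y j) ω} := by
      intro ω h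
      simp only [Set.mem_compl_iff, Set.mem_setOf_eq, not_le] at h
      exact h.le
    refine (measure_mono hsub).trans ?_
    rw [← ENNReal.ofReal_toReal (measure_ne_top μ _)]
    exact ENNReal.ofReal_le_ofReal hch2
  have heq : μ {ω | (∑ j, Y j) ω ≤ ε} = 1 - μ ({ω | (∑ j, Y j) ω ≤ ε})ᶜ := by
    have h2 := prob_compl_eq_one_sub (μ := μ) hms.compl
    rwa [compl_compl] at h2
  rw [heq]
  exact tsub_le_tsub_left hcompl 1
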